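/- Let P = {x ∈ ℝ^n : Ax ≤ b, 0 ≤ x_i ≤ u_i for i ∈ I} be a rational polytope with I = {1,…,l}. Let ℬ = (B^1,…,B^l) be a binarization scheme in which each B^i ∈ Γ^{u_i}_{u_i} is a unimodular binarization polytope, and let 𝒞 = (C^1,…,C^l) be an arbitrary binarization scheme with C^i ∈ Γ^{q_i}_{u_i}. Then for every integer k ≥ 1, proj_x(SC^k(P_ℬ, I_ℬ)) ⊆ proj_x(SC^k(P_𝒞, I_𝒞)). -/
import Mathlib


open Set

/-- The split closure of `P` with respect to a family `Λ` of (integral) linear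
functionals: the intersection over all `f ∈ Λ` and all integers `c` of the convex
hull of `P` minus the split set `{x : c < f x < c + 1}`. -/
noncomputable def splitClosure {E : Type*} [AddCommGroup E] [Module ℝ E]
    (Λ : Set (E → ℝ)) (P : Set E) : Set E :=
  ⋂ f ∈ Λ, ⋂ c : ℤ, convexHull ℝ (P \ {x | (c : ℝ) < f x ∧ f x < c + 1})

/-- A rational polytope in `ℝ × ℝ^q`: the convex hull of finitely many rational points. -/
def IsRatPolytopeBin (q : ℕ) (B : Set (ℝ × (Fin q → ℝ))) : Prop :=
  ∃ V : Finset (ℝ × (Fin q → ℝ)),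
    (∀ p ∈ V, (∃ r : ℚ, p.1 = (r : ℝ)) ∧ ∀ j, ∃ r : ℚ, p.2 j = (r : ℝ)) ∧
    B = convexHull ℝ (V : Set (ℝ × (Fin q → ℝ)))

/-- `B ∈ Γ^q_u`: a binarization polytope for a variable `x ∈ {0,…,u}` using `q` binary
variables: a rational polytope contained in `[0,u] × [0,1]^q` whose set of 0-1 points
projects (in the `x` coordinate) exactly onto `{0,1,…,u}`. -/
def IsBinPoly (u q : ℕ) (B : Set (ℝ × (Fin q → ℝ))) : Prop :=
  IsRatPolytopeBin q B ∧
  (∀ p ∈ B, 0 ≤ p.1 ∧ p.1 ≤ (u : ℝ) ∧ ∀ j, 0 ≤ p.2 j ∧ p.2 j ≤ 1) ∧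
  Prod.fst '' (B ∩ {p | ∀ j, p.2 j = 0 ∨ p.2 j = 1}) = {x : ℝ | ∃ k : ℕ, k ≤ u ∧ x = (k : ℝ)}

/-- A unimodular binarization polytope `B ∈ Γ^u_u`: a perfect binarization polytope
`B = conv{(j, w^j) : j = 0,…,u}` with `w^j ∈ {0,1}^u` such that the `u × u` matrix
with columns `w^j - w^0`, `j = 1,…,u`, is unimodular (integral with determinant `±1`). -/
def IsUnimodularBin (u : ℕ) (B : Set (ℝ × (Fin u → ℝ))) : Prop :=
  IsBinPoly u u B ∧
  ∃ w : Fin (u + 1) → Fin u → ℝ,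
    (∀ j i, w j i = 0 ∨ w j i = 1) ∧
    B = convexHull ℝ {p : ℝ × (Fin u → ℝ) | ∃ j : Fin (u + 1), p = (((j : ℕ) : ℝ), w j)} ∧
    ∃ N : Matrix (Fin u) (Fin u) ℤ,
      (∀ i j : Fin u, (N i j : ℝ) = w j.succ i - w 0 i) ∧ (N.det = 1 ∨ N.det = -1)

/-- The binary extended formulation `P_ℬ ⊆ ℝ^n × ℝ^{q₁} × ⋯ × ℝ^{q_l}` associated with a
binarization scheme `ℬ = (B^1,…,B^l)`: the set of `(x,z)` with `x ∈ P` and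
`(x_i, z_i) ∈ B^i` for each `i ∈ I = {1,…,l}`. -/
def extForm {n l : ℕ} (hln : l ≤ n) {q : Fin l → ℕ} (P : Set (Fin n → ℝ))
    (B : (i : Fin l) → Set (ℝ × (Fin (q i) → ℝ))) :
    Set ((Fin n → ℝ) × ((i : Fin l) → Fin (q i) → ℝ)) :=
  {p | p.1 ∈ P ∧ ∀ i : Fin l, (p.1 (Fin.castLE hln i), p.2 i) ∈ B i}

/-- The family of split functionals on the extended space corresponding to the index set
`I_ℬ = {1,…,l} ∪ {n+1,…,n+q}`: integer coefficients on `x_1,…,x_l` and on all of the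
binarization variables `z`, zero coefficients on `x_{l+1},…,x_n`. -/
def extSplits (n l : ℕ) (hln : l ≤ n) (q : Fin l → ℕ) :
    Set (((Fin n → ℝ) × ((i : Fin l) → Fin (q i) → ℝ)) → ℝ) :=
  {f | ∃ (π : Fin l → ℤ) (c : (i : Fin l) → Fin (q i) → ℤ),
    f = fun p => (∑ i, (π i : ℝ) * p.1 (Fin.castLE hln i)) +
      ∑ i, ∑ j, (c i j : ℝ) * p.2 i j}

section Aux

open Set

private lemma affImage {E F : Type*} [AddCommGroup E] [Module ℝ E] [AddCommGroup F] [Module ℝ F]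
    (L : E →ₗ[ℝ] F) (c₀ : F) (s : Set E) :
    (fun p => c₀ + L p) '' convexHull ℝ s ⊆ convexHull ℝ ((fun p => c₀ + L p) '' s) := by
  have hΦ : (fun p => c₀ + L p) =
      ⇑(AffineMap.mk (fun p => c₀ + L p) L (by
        intro p v
        simp only [vadd_eq_add, map_add]
        abel) : E →ᵃ[ℝ] F) := rfl
  rw [hΦ, AffineMap.image_convexHull]

private lemma sc_map {E F : Type*} [AddCommGroup E] [Module ℝ E] [AddCommGroup F] [Module ℝ F]
    (Φ : E → F)
    (haff : ∀ s : Set E, Φ '' convexHull ℝ s ⊆ convexHull ℝ (Φ '' s))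
    (Λ : Set (E → ℝ)) (Λ' : Set (F → ℝ))
    (hpull : ∀ f ∈ Λ', ∃ g ∈ Λ, ∃ γ : ℤ, ∀ p, f (Φ p) = g p + γ)
    {X : Set E} {Y : Set F} (hXY : Φ '' X ⊆ Y) :
    Φ '' splitClosure Λ X ⊆ splitClosure Λ' Y := by
  rintro _ ⟨p, hp, rfl⟩
  simp only [splitClosure, mem_iInter] at hp ⊢
  intro f hf c
  obtain ⟨g, hg, γ, hgf⟩ := hpull f hf
  have h1 : p ∈ convexHull ℝ (X \ {x | ((c - γ : ℤ) : ℝ) < g x ∧ g x < (c - γ : ℤ) + 1}) :=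
    hp g hg (c - γ)
  have h2 := haff _ ⟨p, h1, rfl⟩
  refine convexHull_mono ?_ h2
  rintro _ ⟨x2, ⟨hxX, hxS⟩, rfl⟩
  refine ⟨hXY ⟨x2, hxX, rfl⟩, ?_⟩
  rintro ⟨ha, hb⟩
  apply hxS
  rw [hgf] at ha hb
  push_cast at ha hb ⊢
  constructor <;> linarith

private lemma sc_iter_map {E F : Type*} [AddCommGroup E] [Module ℝ E] [AddCommGroup F]
    [Module ℝ F] (Φ : E → F)
    (haff : ∀ s : Set E, Φ '' convexHull ℝ s ⊆ convexHull ℝ (Φ '' s))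
    (Λ : Set (E → ℝ)) (Λ' : Set (F → ℝ))
    (hpull : ∀ f ∈ Λ', ∃ g ∈ Λ, ∃ γ : ℤ, ∀ p, f (Φ p) = g p + γ)
    {X : Set E} {Y : Set F} (hXY : Φ '' X ⊆ Y) (k : ℕ) :
    Φ '' (splitClosure Λ)^[k] X ⊆ (splitClosure Λ')^[k] Y := by
  induction k with
  | zero => simpa using hXY
  | succ k ih =>
    rw [Function.iterate_succ_apply', Function.iterate_succ_apply']
    exact sc_map Φ haff Λ Λ' hpull ih

private noncomputable def z2i (r : ℝ) : ℤ := if r = 1 then 1 else 0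

private lemma z2i_cast {r : ℝ} (h : r = 0 ∨ r = 1) : ((z2i r : ℤ) : ℝ) = r := by
  rcases h with h | h <;> simp [z2i, h]

end Aux

/-- Let `P = {x ∈ ℝ^n : Ax ≤ b, 0 ≤ x_i ≤ u_i for i ∈ I}` be a
rational polytope with `I = {1,…,l}`.  Let `ℬ = (B^1,…,B^l)` be a binarization scheme
of unimodular binarization polytopes `B^i ∈ Γ^{u_i}_{u_i}` and `𝒞 = (C^1,…,C^l)` an
arbitrary binarization scheme with `C^i ∈ Γ^{q_i}_{u_i}`.  Then for every integer
`k ≥ 1`, `proj_x(SC^k(P_ℬ, I_ℬ)) ⊆ proj_x(SC^k(P_𝒞, I_𝒞))`. -/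
theorem stmt2 (n l m : ℕ) (hln : l ≤ n)
    (A : Fin m → Fin n → ℚ) (b : Fin m → ℚ) (u : Fin l → ℕ) (hu : ∀ i, 0 < u i)
    (P : Set (Fin n → ℝ))
    (hP : P = {x | (∀ r, ∑ j, (A r j : ℝ) * x j ≤ (b r : ℝ)) ∧
      ∀ i : Fin l, 0 ≤ x (Fin.castLE hln i) ∧ x (Fin.castLE hln i) ≤ (u i : ℝ)})
    (hPbdd : Bornology.IsBounded P)
    (B : (i : Fin l) → Set (ℝ × (Fin (u i) → ℝ)))
    (hB : ∀ i, IsUnimodularBin (u i) (B i))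
    (q : Fin l → ℕ)
    (C : (i : Fin l) → Set (ℝ × (Fin (q i) → ℝ)))
    (hC : ∀ i, IsBinPoly (u i) (q i) (C i))
    (k : ℕ) (hk : 1 ≤ k) :
    Prod.fst '' ((splitClosure (extSplits n l hln (fun i => u i)))^[k] (extForm hln P B)) ⊆
      Prod.fst '' ((splitClosure (extSplits n l hln q))^[k] (extForm hln P C)) := by
  classical
  -- Extract the unimodular structure of each `B i`
  have hB2 := fun i => (hB i).2
  choose w hw01 hBconv N hNcast hNdet using hB2
  -- For every value `j ∈ {0,…,u i}` pick a 0-1 point of `C i` over `j`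
  have hCv : ∀ i (j : Fin (u i + 1)), ∃ vz : Fin (q i) → ℝ,
      ((((j : ℕ) : ℝ)), vz) ∈ C i ∧ ∀ t, vz t = 0 ∨ vz t = 1 := by
    intro i j
    have hproj := (hC i).2.2
    have hmem : (((j : ℕ) : ℝ)) ∈ {x : ℝ | ∃ k : ℕ, k ≤ u i ∧ x = (k : ℝ)} :=
      ⟨(j : ℕ), Nat.lt_succ_iff.mp j.isLt, rfl⟩
    rw [← hproj] at hmem
    obtain ⟨p, ⟨hpC, hp01⟩, hp1⟩ := hmem
    exact ⟨p.2, by rw [← hp1]; exact hpC, hp01⟩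
  choose v hvC hv01 using hCv
  -- The integral inverse of `N i`
  set Ninv : (i : Fin l) → Matrix (Fin (u i)) (Fin (u i)) ℤ :=
    fun i => (N i).det • (N i).adjugate with hNinvdef
  have hNN : ∀ i, Ninv i * N i = 1 := by
    intro i
    have h2 : (N i).det * (N i).det = 1 := by rcases hNdet i with h | h <;> rw [h] <;> ring
    calc Ninv i * N i = (N i).det • ((N i).adjugate * N i) := by
          rw [hNinvdef, Matrix.smul_mul]
      _ = (N i).det • ((N i).det • (1 : Matrix _ _ ℤ)) := by rw [Matrix.adjugate_mul]
      _ = ((N i).det * (N i).det) • (1 : Matrix _ _ ℤ) := smul_smul _ _ _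
      _ = 1 := by rw [h2, one_smul]
  -- Integer data of the affine map
  set M : (i : Fin l) → Matrix (Fin (q i)) (Fin (u i)) ℤ :=
    fun i t s => z2i (v i (Fin.succ s) t) - z2i (v i 0 t) with hMdef
  set R : (i : Fin l) → Matrix (Fin (q i)) (Fin (u i)) ℤ :=
    fun i => M i * Ninv i with hRdef
  set d : (i : Fin l) → Fin (q i) → ℤ :=
    fun i t => z2i (v i 0 t) - ∑ s, R i t s * z2i (w i 0 s) with hddef
  have hRN : ∀ i, R i * N i = M i := by
    intro i; rw [hRdef, Matrix.mul_assoc, hNN, Matrix.mul_one]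
  have hvcast : ∀ i (j : Fin (u i + 1)) t, ((z2i (v i j t) : ℤ) : ℝ) = v i j t :=
    fun i j t => z2i_cast (hv01 i j t)
  have hwcast : ∀ i (j : Fin (u i + 1)) s, ((z2i (w i j s) : ℤ) : ℝ) = w i j s :=
    fun i j s => z2i_cast (hw01 i j s)
  -- The key property: the affine map sends the vertex `(j, w j)` to `(j, v j)`
  have hmap : ∀ i (j : Fin (u i + 1)) (t : Fin (q i)),
      (d i t : ℝ) + ∑ s, (R i t s : ℝ) * w i j s = v i j t := by
    intro i j t
    have hdcast : (d i t : ℝ) = v i 0 t - ∑ s, (R i t s : ℝ) * w i 0 s := by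
      rw [hddef]
      push_cast
      rw [hvcast i 0 t]
      congr 1
      refine Finset.sum_congr rfl fun s _ => ?_
      rw [hwcast i 0 s]
    rw [hdcast]
    induction j using Fin.cases with
    | zero => ring
    | succ j' =>
      have hsum : ∑ s, (R i t s : ℝ) * w i (Fin.succ j') s - ∑ s, (R i t s : ℝ) * w i 0 s
          = ((M i) t j' : ℝ) := by
        rw [← Finset.sum_sub_distrib]
        have hterm : ∀ s, (R i t s : ℝ) * w i (Fin.succ j') s - (R i t s : ℝ) * w i 0 s
            = (R i t s : ℝ) * (N i s j' : ℝ) := by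
          intro s; rw [hNcast i s j']; ring
        rw [Finset.sum_congr rfl fun s _ => hterm s]
        have hmulcast : ((R i * N i) t j' : ℝ) = ∑ s, (R i t s : ℝ) * (N i s j' : ℝ) := by
          rw [Matrix.mul_apply]; push_cast; rfl
        rw [← hmulcast, hRN i]
      have hM' : ((M i) t j' : ℝ) = v i (Fin.succ j') t - v i 0 t := by
        rw [hMdef]; push_cast; rw [hvcast i (Fin.succ j') t, hvcast i 0 t]
      linarith [hsum, hM']
  -- The affine map between the two extended spaces
  set Lmap : ((Fin n → ℝ) × ((i : Fin l) → Fin (u i) → ℝ)) →ₗ[ℝ]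
      ((Fin n → ℝ) × ((i : Fin l) → Fin (q i) → ℝ)) :=
    { toFun := fun p => (p.1, fun i t => ∑ s, (R i t s : ℝ) * p.2 i s)
      map_add' := by
        intro p p'
        refine Prod.ext rfl ?_
        funext i t
        simp [mul_add, Finset.sum_add_distrib]
      map_smul' := by
        intro a p
        refine Prod.ext rfl ?_
        funext i t
        simp [Finset.mul_sum, mul_left_comm] } with hLdef
  set c₀ : (Fin n → ℝ) × ((i : Fin l) → Fin (q i) → ℝ) :=
    (0, fun i t => (d i t : ℝ)) with hc₀def
  set Φ : ((Fin n → ℝ) × ((i : Fin l) → Fin (u i) → ℝ)) →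
      ((Fin n → ℝ) × ((i : Fin l) → Fin (q i) → ℝ)) :=
    fun p => c₀ + Lmap p with hΦdef
  have haff : ∀ s, Φ '' convexHull ℝ s ⊆ convexHull ℝ (Φ '' s) := fun s => affImage Lmap c₀ s
  have hΦ1 : ∀ p, (Φ p).1 = p.1 := fun p => zero_add _
  have hΦ2 : ∀ p i t, (Φ p).2 i t = (d i t : ℝ) + ∑ s, (R i t s : ℝ) * p.2 i s :=
    fun p i t => rfl
  -- Φ maps the B-extended formulation into the C-extended formulation
  have hXY : Φ '' extForm hln P B ⊆ extForm hln P C := by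
    rintro _ ⟨p, ⟨hpP, hpB⟩, rfl⟩
    refine ⟨by rw [hΦ1]; exact hpP, ?_⟩
    intro i
    obtain ⟨V, hVrat, hCeq⟩ := (hC i).1
    have hCconv : Convex ℝ (C i) := hCeq ▸ convex_convexHull ℝ _
    set L2 : (ℝ × (Fin (u i) → ℝ)) →ₗ[ℝ] (ℝ × (Fin (q i) → ℝ)) :=
      { toFun := fun y => (y.1, fun t => ∑ s, (R i t s : ℝ) * y.2 s)
        map_add' := by
          intro y y'
          refine Prod.ext rfl ?_
          funext t
          simp [mul_add, Finset.sum_add_distrib]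
        map_smul' := by
          intro a y
          refine Prod.ext rfl ?_
          funext t
          simp [Finset.mul_sum, mul_left_comm] } with hL2def
    set c₂ : ℝ × (Fin (q i) → ℝ) := (0, fun t => (d i t : ℝ)) with hc₂def
    have himg := affImage L2 c₂
      {p : ℝ × (Fin (u i) → ℝ) | ∃ j : Fin (u i + 1), p = (((j : ℕ) : ℝ), w i j)}
    have hin : (fun y => c₂ + L2 y) (p.1 (Fin.castLE hln i), p.2 i) ∈
        convexHull ℝ ((fun y => c₂ + L2 y) ''
          {p : ℝ × (Fin (u i) → ℝ) | ∃ j : Fin (u i + 1), p = (((j : ℕ) : ℝ), w i j)}) := by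
      refine himg ⟨_, ?_, rfl⟩
      rw [← hBconv i]
      exact hpB i
    have hvert : (fun y => c₂ + L2 y) ''
        {p : ℝ × (Fin (u i) → ℝ) | ∃ j : Fin (u i + 1), p = (((j : ℕ) : ℝ), w i j)} ⊆ C i := by
      rintro _ ⟨_, ⟨j, rfl⟩, rfl⟩
      have heq : (fun y => c₂ + L2 y) ((((j : ℕ) : ℝ)), w i j) = ((((j : ℕ) : ℝ)), v i j) := by
        refine Prod.ext (zero_add _) ?_
        funext t
        exact hmap i j t
      rw [heq]
      exact hvC i j
    exact convexHull_min hvert hCconv hin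
  -- Every split functional on the C-side pulls back to one on the B-side
  have hpull : ∀ f ∈ extSplits n l hln q, ∃ g ∈ extSplits n l hln (fun i => u i), ∃ γ : ℤ,
      ∀ p, f (Φ p) = g p + γ := by
    rintro f ⟨π, c, rfl⟩
    refine ⟨_, ⟨π, fun i s => ∑ t, c i t * R i t s, rfl⟩, ∑ i, ∑ t, c i t * d i t, ?_⟩
    intro p
    have key : ∀ i, ∑ t, (c i t : ℝ) * ((d i t : ℝ) + ∑ s, (R i t s : ℝ) * p.2 i s)
        = (∑ s, ((∑ t, c i t * R i t s : ℤ) : ℝ) * p.2 i s) + ∑ t, ((c i t * d i t : ℤ) : ℝ) := by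
      intro i
      push_cast
      simp only [mul_add, Finset.sum_add_distrib, Finset.mul_sum, Finset.sum_mul]
      rw [Finset.sum_comm]
      ring_nf
    simp only [hΦ1, hΦ2]
    push_cast
    rw [Finset.sum_congr rfl fun i _ => key i]
    rw [Finset.sum_add_distrib]
    push_cast
    ring
  rintro x ⟨p, hp, rfl⟩
  exact ⟨Φ p, sc_iter_map Φ haff _ _ hpull hXY k ⟨p, hp, rfl⟩, hΦ1 p⟩
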